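/- (Hoeffding with dependent summands) Let x_1,...,x_N be random variables with a ≤ x_i ≤ b almost surely, partitioned into M mutually exclusive, collectively exhaustive subsets of cardinalities N_1,...,N_M such that variables within each subset are mutually independent. Then for any t > 0, the sum s_N = Σ x_i satisfies P(|s_N − E[s_N]| ≥ t) ≤ 2M exp( −2t² N_min / (N² (b−a)²) ), where N_min = min_m N_m. -/

import Mathlib

open MeasureTheory ProbabilityTheory

lemma hds_key_pos {p : ℝ} (hp0 : 0 ≤ p) (hp1 : p ≤ 1) (h : ℝ) :
    0 < 1 - p + p * Real.exp h := by
  rcases le_or_gt 1 (Real.exp h) with hh | hh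
  · nlinarith
  · nlinarith [Real.exp_pos h]

lemma hds_key_log {p : ℝ} (hp0 : 0 ≤ p) (hp1 : p ≤ 1) (h : ℝ) :
    Real.log (1 - p + p * Real.exp h) ≤ h ^ 2 / 8 + p * h := by
  set D : ℝ → ℝ := fun x => 1 - p + p * Real.exp x with hD
  have hDpos : ∀ x, 0 < D x := fun x => hds_key_pos hp0 hp1 x
  set f : ℝ → ℝ := fun x => x ^ 2 / 8 + p * x - Real.log (D x) with hf
  set f1 : ℝ → ℝ := fun x => x / 4 + p - p * Real.exp x / D x with hf1
  have hDd : ∀ x, HasDerivAt D (p * Real.exp x) x := fun x =>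
    (((Real.hasDerivAt_exp x).const_mul p).const_add (1 - p))
  have hfd : ∀ x, HasDerivAt f (f1 x) x := by
    intro x
    have h1 : HasDerivAt (fun x : ℝ => x ^ 2 / 8 + p * x) (x / 4 + p) x := by
      have := ((hasDerivAt_pow 2 x).div_const 8).add ((hasDerivAt_id x).const_mul p)
      refine this.congr_deriv ?_
      norm_num; ring
    have h2 : HasDerivAt (fun x => Real.log (D x)) (p * Real.exp x / D x) x :=
      (hDd x).log (hDpos x).ne'
    exact h1.sub h2
  have hf1d : ∀ x, HasDerivAt f1
      (1 / 4 - (p * Real.exp x * D x - p * Real.exp x * (p * Real.exp x)) / (D x) ^ 2) x := by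
    intro x
    have h1 : HasDerivAt (fun x : ℝ => x / 4 + p) (1 / 4) x := by
      simpa using ((hasDerivAt_id x).div_const 4).add_const p
    have h2 : HasDerivAt (fun x => p * Real.exp x / D x)
        ((p * Real.exp x * D x - p * Real.exp x * (p * Real.exp x)) / (D x) ^ 2) x :=
      ((Real.hasDerivAt_exp x).const_mul p).div (hDd x) (hDpos x).ne'
    exact h1.sub h2
  have hf1nonneg : ∀ x, 0 ≤ 1 / 4 -
      (p * Real.exp x * D x - p * Real.exp x * (p * Real.exp x)) / (D x) ^ 2 := by
    intro x
    have hDx := hDpos x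
    rw [sub_nonneg, div_le_iff₀ (by positivity : (0:ℝ) < (D x) ^ 2)]
    have hE := Real.exp_pos x
    have : D x = 1 - p + p * Real.exp x := rfl
    nlinarith [sq_nonneg (1 - p - p * Real.exp x)]
  have hmono : Monotone f1 := by
    refine monotone_of_deriv_nonneg (fun x => (hf1d x).differentiableAt) (fun x => ?_)
    rw [(hf1d x).deriv]; exact hf1nonneg x
  have hf10 : f1 0 = 0 := by
    simp only [hf1, hD, Real.exp_zero, mul_one]
    have : 1 - p + p = 1 := by ring
    rw [this]
    ring
  have hcont : Continuous f := by
    have hdf : Differentiable ℝ f := fun x => (hfd x).differentiableAt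
    exact hdf.continuous
  have hf0 : f 0 = 0 := by
    simp only [hf, hD, Real.exp_zero, mul_one]
    have : 1 - p + p = 1 := by ring
    rw [this]
    simp
  have hfnonneg : ∀ x, 0 ≤ f x := by
    intro x
    rcases le_total 0 x with hx | hx
    · have hm : MonotoneOn f (Set.Ici 0) := by
        refine monotoneOn_of_deriv_nonneg (convex_Ici 0) hcont.continuousOn
          (fun y _ => (hfd y).differentiableAt.differentiableWithinAt) (fun y hy => ?_)
        rw [(hfd y).deriv]
        have : (0:ℝ) ≤ y := le_of_lt (by simpa using hy)
        calc (0:ℝ) = f1 0 := hf10.symm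
          _ ≤ f1 y := hmono this
      have := hm (Set.self_mem_Ici) hx hx
      rwa [hf0] at this
    · have hm : AntitoneOn f (Set.Iic 0) := by
        refine antitoneOn_of_deriv_nonpos (convex_Iic 0) hcont.continuousOn
          (fun y _ => (hfd y).differentiableAt.differentiableWithinAt) (fun y hy => ?_)
        rw [(hfd y).deriv]
        have hy0 : y ≤ 0 := le_of_lt (by simpa using hy)
        calc f1 y ≤ f1 0 := hmono hy0
          _ = 0 := hf10
      have := hm hx (Set.self_mem_Iic) hx
      rwa [hf0] at this
  have := hfnonneg h
  simp only [hf, hD] at this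
  linarith

lemma hds_key_exp {p : ℝ} (hp0 : 0 ≤ p) (hp1 : p ≤ 1) (h : ℝ) :
    (1 - p) * Real.exp (-p * h) + p * Real.exp ((1 - p) * h) ≤ Real.exp (h ^ 2 / 8) := by
  have hDpos := hds_key_pos hp0 hp1 h
  have heq : (1 - p) * Real.exp (-p * h) + p * Real.exp ((1 - p) * h)
      = Real.exp (-p * h) * (1 - p + p * Real.exp h) := by
    rw [show (1 - p) * h = h + -p * h by ring, Real.exp_add]
    ring
  rw [heq, ← Real.exp_log hDpos, ← Real.exp_add, Real.exp_le_exp]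
  have := hds_key_log hp0 hp1 h
  linarith

lemma hds_integrable_of_bdd {Ω : Type*} [MeasurableSpace Ω] (μ : Measure Ω)
    [IsProbabilityMeasure μ] {Z : Ω → ℝ} (hZ : Measurable Z) {a b : ℝ}
    (hbdd : ∀ᵐ ω ∂μ, Z ω ∈ Set.Icc a b) : Integrable Z μ := by
  refine Integrable.mono' (integrable_const (|a| + |b|)) hZ.aestronglyMeasurable ?_
  filter_upwards [hbdd] with ω hω
  rw [Real.norm_eq_abs, abs_le]
  constructor
  · have := hω.1; have := neg_abs_le a; have := abs_nonneg b; linarith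
  · have := hω.2; have := le_abs_self b; have := abs_nonneg a; linarith

lemma hds_integrable_exp_mul {Ω : Type*} [MeasurableSpace Ω] (μ : Measure Ω)
    [IsProbabilityMeasure μ] {Z : Ω → ℝ} (hZ : Measurable Z) {a b : ℝ}
    (hbdd : ∀ᵐ ω ∂μ, Z ω ∈ Set.Icc a b) (s : ℝ) :
    Integrable (fun ω => Real.exp (s * Z ω)) μ := by
  refine Integrable.mono' (integrable_const (Real.exp (|s| * (|a| + |b|))))
    ((hZ.const_mul s).exp.aestronglyMeasurable) ?_
  filter_upwards [hbdd] with ω hω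
  rw [Real.norm_eq_abs, abs_of_pos (Real.exp_pos _), Real.exp_le_exp]
  have hZa : |Z ω| ≤ |a| + |b| := by
    rw [abs_le]
    constructor
    · have := hω.1; have := neg_abs_le a; have := abs_nonneg b; linarith
    · have := hω.2; have := le_abs_self b; have := abs_nonneg a; linarith
  calc s * Z ω ≤ |s * Z ω| := le_abs_self _
    _ = |s| * |Z ω| := abs_mul s (Z ω)
    _ ≤ |s| * (|a| + |b|) := by
        exact mul_le_mul_of_nonneg_left hZa (abs_nonneg s)

/-- Hoeffding's lemma. -/
lemma hds_mgf_le {Ω : Type*} [MeasurableSpace Ω] (μ : Measure Ω)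
    [IsProbabilityMeasure μ] {Z : Ω → ℝ} (hZ : Measurable Z) {a b : ℝ} (hab : a < b)
    (hbdd : ∀ᵐ ω ∂μ, Z ω ∈ Set.Icc a b) (hmean : ∫ ω, Z ω ∂μ = 0) (s : ℝ) :
    mgf Z μ s ≤ Real.exp (s ^ 2 * (b - a) ^ 2 / 8) := by
  have hba : (0:ℝ) < b - a := by linarith
  have hZint : Integrable Z μ := hds_integrable_of_bdd μ hZ hbdd
  have ha0 : a ≤ 0 := by
    have : a ≤ ∫ ω, Z ω ∂μ := by
      rw [show a = ∫ _, a ∂μ by simp]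
      exact integral_mono_ae (integrable_const a) hZint
        (by filter_upwards [hbdd] with ω hω using hω.1)
    linarith [this.trans_eq hmean]
  have hb0 : 0 ≤ b := by
    have : ∫ ω, Z ω ∂μ ≤ b := by
      rw [show b = ∫ _, b ∂μ by simp]
      exact integral_mono_ae hZint (integrable_const b)
        (by filter_upwards [hbdd] with ω hω using hω.2)
    linarith [hmean ▸ this]
  set c1 : ℝ := Real.exp (s * a) / (b - a)
  set c2 : ℝ := Real.exp (s * b) / (b - a)
  have hptwise : ∀ᵐ ω ∂μ, Real.exp (s * Z ω) ≤ c1 * (b - Z ω) + c2 * (Z ω - a) := by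
    filter_upwards [hbdd] with ω hω
    obtain ⟨hz1, hz2⟩ := hω
    set z := Z ω
    have hl1 : (0:ℝ) ≤ (b - z) / (b - a) := div_nonneg (by linarith) hba.le
    have hl2 : (0:ℝ) ≤ (z - a) / (b - a) := div_nonneg (by linarith) hba.le
    have hsum : (b - z) / (b - a) + (z - a) / (b - a) = 1 := by field_simp; ring
    have hconv := convexOn_exp.2 (Set.mem_univ (s * a)) (Set.mem_univ (s * b)) hl1 hl2 hsum
    simp only [smul_eq_mul] at hconv
    have harg : (b - z) / (b - a) * (s * a) + (z - a) / (b - a) * (s * b) = s * z := by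
      field_simp; ring
    rw [harg] at hconv
    calc Real.exp (s * z) ≤ (b - z) / (b - a) * Real.exp (s * a)
          + (z - a) / (b - a) * Real.exp (s * b) := hconv
      _ = c1 * (b - z) + c2 * (z - a) := by simp only [c1, c2]; ring
  have hexpint := hds_integrable_exp_mul μ hZ hbdd s
  have hrhsint : Integrable (fun ω => c1 * (b - Z ω) + c2 * (Z ω - a)) μ :=
    (((integrable_const b).sub hZint).const_mul c1).add
      ((hZint.sub (integrable_const a)).const_mul c2)
  have hstep : mgf Z μ s ≤ c1 * b + c2 * (-a) := by
    have := integral_mono_ae hexpint hrhsint hptwise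
    refine this.trans_eq ?_
    have heq : (fun ω => c1 * (b - Z ω) + c2 * (Z ω - a))
        = fun ω => (c2 - c1) * Z ω + (c1 * b + c2 * (-a)) := by
      funext ω; ring
    rw [heq, integral_add (hZint.const_mul _) (integrable_const _),
      MeasureTheory.integral_const_mul, hmean, integral_const]
    simp
  refine hstep.trans ?_
  set p : ℝ := -a / (b - a) with hp
  have hp0 : 0 ≤ p := div_nonneg (by linarith) hba.le
  have hp1 : p ≤ 1 := by rw [hp, div_le_one hba]; linarith
  have key := hds_key_exp hp0 hp1 (s * (b - a))
  have h1 : 1 - p = b / (b - a) := by rw [hp]; field_simp; ring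
  have h2 : -p * (s * (b - a)) = s * a := by rw [hp]; field_simp
  have h3 : (1 - p) * (s * (b - a)) = s * b := by rw [h1]; field_simp
  have h4 : (s * (b - a)) ^ 2 / 8 = s ^ 2 * (b - a) ^ 2 / 8 := by ring
  rw [h2, h3, h4, h1] at key
  have : c1 * b + c2 * (-a) = b / (b - a) * Real.exp (s * a) + p * Real.exp (s * b) := by
    simp only [c1, c2]; rw [hp]; field_simp
  linarith [key, this.le, this.ge]

lemma hds_one_sided {Ω : Type*} [MeasurableSpace Ω] (μ : Measure Ω) [IsProbabilityMeasure μ]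
    {ι : Type*} [Fintype ι] (hn : 0 < Fintype.card ι) (Y : ι → Ω → ℝ)
    (hmeas : ∀ i, Measurable (Y i)) {a b : ℝ} (hab : a < b)
    (hbdd : ∀ i, ∀ᵐ ω ∂μ, Y i ω ∈ Set.Icc a b)
    (hindep : iIndepFun Y μ)
    (ε : ℝ) (hε : 0 < ε) :
    μ {ω | ε ≤ ∑ i, Y i ω - ∑ i, ∫ ω', Y i ω' ∂μ} ≤
      ENNReal.ofReal (Real.exp (-2 * ε ^ 2 / (Fintype.card ι * (b - a) ^ 2))) := by
  have hba : (0:ℝ) < b - a := by linarith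
  set n : ℝ := (Fintype.card ι : ℝ) with hn'
  have hnR : (0:ℝ) < n := by rw [hn']; exact_mod_cast hn
  set Z : ι → Ω → ℝ := fun i ω => Y i ω - ∫ ω', Y i ω' ∂μ with hZ
  have hZmeas : ∀ i, Measurable (Z i) := fun i => (hmeas i).sub_const _
  have hZindep : iIndepFun Z μ :=
    hindep.comp (fun i => fun x => x - ∫ ω', Y i ω' ∂μ)
      (fun i => measurable_id.sub_const _)
  have hZbdd : ∀ i, ∀ᵐ ω ∂μ, Z i ω ∈ Set.Icc (a - ∫ ω', Y i ω' ∂μ) (b - ∫ ω', Y i ω' ∂μ) := by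
    intro i
    filter_upwards [hbdd i] with ω hω
    exact ⟨by simp only [hZ]; linarith [hω.1], by simp only [hZ]; linarith [hω.2]⟩
  have hZmean : ∀ i, ∫ ω, Z i ω ∂μ = 0 := by
    intro i
    simp only [hZ]
    rw [integral_sub (hds_integrable_of_bdd μ (hmeas i) (hbdd i)) (integrable_const _)]
    simp
  set s : ℝ := 4 * ε / (n * (b - a) ^ 2) with hs'
  have hs : 0 < s := div_pos (by linarith) (mul_pos hnR (pow_pos hba 2))
  have hmgf : ∀ i, mgf (Z i) μ s ≤ Real.exp (s ^ 2 * (b - a) ^ 2 / 8) := by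
    intro i
    have h := hds_mgf_le μ (hZmeas i)
      (show a - ∫ ω', Y i ω' ∂μ < b - ∫ ω', Y i ω' ∂μ by linarith)
      (hZbdd i) (hZmean i) s
    rwa [show b - ∫ ω', Y i ω' ∂μ - (a - ∫ ω', Y i ω' ∂μ) = b - a from by ring] at h
  have hint : ∀ i ∈ Finset.univ, Integrable (fun ω => Real.exp (s * Z i ω)) μ :=
    fun i _ => hds_integrable_exp_mul μ (hZmeas i) (hZbdd i) s
  have hintsum := hZindep.integrable_exp_mul_sum hZmeas hint
  have hchernoff := measure_ge_le_exp_mul_mgf (μ := μ) ε hs.le hintsum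
  have hmgfsum : mgf (∑ i ∈ Finset.univ, Z i) μ s = ∏ i, mgf (Z i) μ s :=
    hZindep.mgf_sum hZmeas Finset.univ
  have hprod : ∏ i, mgf (Z i) μ s ≤ Real.exp (n * (s ^ 2 * (b - a) ^ 2 / 8)) := by
    calc ∏ i, mgf (Z i) μ s ≤ ∏ _i : ι, Real.exp (s ^ 2 * (b - a) ^ 2 / 8) :=
          Finset.prod_le_prod (fun i _ => mgf_nonneg) (fun i _ => hmgf i)
      _ = Real.exp (s ^ 2 * (b - a) ^ 2 / 8) ^ Fintype.card ι := by
          rw [Finset.prod_const, Finset.card_univ]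
      _ = Real.exp (n * (s ^ 2 * (b - a) ^ 2 / 8)) := by
          rw [hn', ← Real.exp_nat_mul]
  have harith : -s * ε + n * (s ^ 2 * (b - a) ^ 2 / 8) = -2 * ε ^ 2 / (n * (b - a) ^ 2) := by
    rw [hs']
    field_simp
    ring
  have hseteq : {ω | ε ≤ ∑ i, Y i ω - ∑ i, ∫ ω', Y i ω' ∂μ}
      = {ω | ε ≤ (∑ i ∈ Finset.univ, Z i) ω} := by
    ext ω
    simp only [Set.mem_setOf_eq, Finset.sum_apply, hZ, Finset.sum_sub_distrib]
  rw [hseteq, ← ENNReal.ofReal_toReal (measure_ne_top μ _)]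
  refine ENNReal.ofReal_le_ofReal ?_
  calc (μ {ω | ε ≤ (∑ i ∈ Finset.univ, Z i) ω}).toReal
      ≤ Real.exp (-s * ε) * mgf (∑ i ∈ Finset.univ, Z i) μ s := hchernoff
    _ ≤ Real.exp (-s * ε) * Real.exp (n * (s ^ 2 * (b - a) ^ 2 / 8)) := by
        rw [hmgfsum]
        exact mul_le_mul_of_nonneg_left hprod (Real.exp_pos _).le
    _ = Real.exp (-2 * ε ^ 2 / (n * (b - a) ^ 2)) := by
        rw [← Real.exp_add, harith]

lemma hds_two_sided {Ω : Type*} [MeasurableSpace Ω] (μ : Measure Ω) [IsProbabilityMeasure μ]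
    {ι : Type*} [Fintype ι] (hn : 0 < Fintype.card ι) (Y : ι → Ω → ℝ)
    (hmeas : ∀ i, Measurable (Y i)) {a b : ℝ} (hab : a < b)
    (hbdd : ∀ i, ∀ᵐ ω ∂μ, Y i ω ∈ Set.Icc a b)
    (hindep : iIndepFun Y μ)
    (ε : ℝ) (hε : 0 < ε) :
    μ {ω | ε ≤ |∑ i, Y i ω - ∑ i, ∫ ω', Y i ω' ∂μ|} ≤
      ENNReal.ofReal (2 * Real.exp (-2 * ε ^ 2 / (Fintype.card ι * (b - a) ^ 2))) := by
  have h1 := hds_one_sided μ hn Y hmeas hab hbdd hindep ε hε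
  set Yn : ι → Ω → ℝ := fun i ω => -(Y i ω) with hYn
  have h2' := hds_one_sided μ hn Yn (fun i => (hmeas i).neg)
    (show -b < -a by linarith)
    (fun i => by filter_upwards [hbdd i] with ω hω using ⟨by simp [hYn]; linarith [hω.2],
      by simp [hYn]; linarith [hω.1]⟩)
    (hindep.comp (fun _ => fun x : ℝ => -x) (fun _ => measurable_neg)) ε hε
  have hexps : -a - -b = b - a := by ring
  rw [hexps] at h2'
  have h2 : μ {ω | ε ≤ -(∑ i, Y i ω - ∑ i, ∫ ω', Y i ω' ∂μ)} ≤
      ENNReal.ofReal (Real.exp (-2 * ε ^ 2 / (Fintype.card ι * (b - a) ^ 2))) := by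
    refine le_trans (le_of_eq ?_) h2'
    congr 1
    ext ω
    simp only [Set.mem_setOf_eq, hYn, integral_neg, Finset.sum_neg_distrib]
    constructor <;> intro h <;> linarith
  have hsub : {ω | ε ≤ |∑ i, Y i ω - ∑ i, ∫ ω', Y i ω' ∂μ|} ⊆
      {ω | ε ≤ ∑ i, Y i ω - ∑ i, ∫ ω', Y i ω' ∂μ} ∪
      {ω | ε ≤ -(∑ i, Y i ω - ∑ i, ∫ ω', Y i ω' ∂μ)} := by
    intro ω hω
    simp only [Set.mem_setOf_eq] at hω
    rcases abs_cases (∑ i, Y i ω - ∑ i, ∫ ω', Y i ω' ∂μ) with ⟨he, _⟩ | ⟨he, _⟩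
    · left; simp only [Set.mem_setOf_eq]; linarith
    · right; simp only [Set.mem_setOf_eq]; linarith
  calc μ {ω | ε ≤ |∑ i, Y i ω - ∑ i, ∫ ω', Y i ω' ∂μ|}
      ≤ μ ({ω | ε ≤ ∑ i, Y i ω - ∑ i, ∫ ω', Y i ω' ∂μ} ∪
        {ω | ε ≤ -(∑ i, Y i ω - ∑ i, ∫ ω', Y i ω' ∂μ)}) := measure_mono hsub
    _ ≤ μ {ω | ε ≤ ∑ i, Y i ω - ∑ i, ∫ ω', Y i ω' ∂μ} +
        μ {ω | ε ≤ -(∑ i, Y i ω - ∑ i, ∫ ω', Y i ω' ∂μ)} := measure_union_le _ _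
    _ ≤ ENNReal.ofReal (Real.exp (-2 * ε ^ 2 / (Fintype.card ι * (b - a) ^ 2))) +
        ENNReal.ofReal (Real.exp (-2 * ε ^ 2 / (Fintype.card ι * (b - a) ^ 2))) :=
        add_le_add h1 h2
    _ = ENNReal.ofReal (2 * Real.exp (-2 * ε ^ 2 / (Fintype.card ι * (b - a) ^ 2))) := by
        rw [← ENNReal.ofReal_add (Real.exp_pos _).le (Real.exp_pos _).le]
        congr 1
        ring

theorem hoeffding_dependent_summands
    {Ω : Type*} [MeasurableSpace Ω] (μ : Measure Ω) [IsProbabilityMeasure μ]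
    (N M : ℕ) (hM : 0 < M) (X : Fin N → Ω → ℝ) (a b : ℝ)
    (hmeas : ∀ i, Measurable (X i))
    (hbdd : ∀ i, ∀ᵐ ω ∂μ, X i ω ∈ Set.Icc a b)
    (c : Fin N → Fin M)
    (hindep : ∀ m : Fin M,
      iIndepFun (fun i : {i : Fin N // c i = m} => X i) μ)
    (Nmin : ℕ)
    (hNmin : Nmin = Finset.univ.inf' (Finset.univ_nonempty_iff.mpr ⟨⟨0, hM⟩⟩) fun m : Fin M =>
      (Finset.univ.filter fun i : Fin N => c i = m).card)
    (t : ℝ) (ht : 0 < t) :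
    μ {ω | t ≤ |(∑ i, X i ω) - ∑ i, ∫ ω', X i ω' ∂μ|} ≤
      ENNReal.ofReal (2 * M *
        Real.exp (-2 * t ^ 2 * Nmin / ((N : ℝ) ^ 2 * (b - a) ^ 2))) := by
  by_cases htriv : (1:ℝ) ≤ 2 * M * Real.exp (-2 * t ^ 2 * Nmin / ((N : ℝ) ^ 2 * (b - a) ^ 2))
  · calc μ {ω | t ≤ |(∑ i, X i ω) - ∑ i, ∫ ω', X i ω' ∂μ|} ≤ μ Set.univ :=
        measure_mono (Set.subset_univ _)
      _ = 1 := measure_univ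
      _ ≤ ENNReal.ofReal _ := by
          rw [← ENNReal.ofReal_one]; exact ENNReal.ofReal_le_ofReal htriv
  push_neg at htriv
  have hM1 : (1:ℝ) ≤ 2 * M := by
    have : (1:ℝ) ≤ (M:ℝ) := by exact_mod_cast hM
    linarith
  have hexp1 : Real.exp (-2 * t ^ 2 * Nmin / ((N : ℝ) ^ 2 * (b - a) ^ 2)) < 1 := by
    nlinarith [Real.exp_pos (-2 * t ^ 2 * (Nmin:ℝ) / ((N : ℝ) ^ 2 * (b - a) ^ 2))]
  have hEneg : -2 * t ^ 2 * (Nmin:ℝ) / ((N : ℝ) ^ 2 * (b - a) ^ 2) < 0 := by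
    by_contra h
    push_neg at h
    have := Real.add_one_le_exp (-2 * t ^ 2 * (Nmin:ℝ) / ((N : ℝ) ^ 2 * (b - a) ^ 2))
    linarith
  have hNmin_pos : 0 < Nmin := by
    rcases Nat.eq_zero_or_pos Nmin with h0 | h
    · rw [h0] at hEneg; norm_num at hEneg
    · exact h
  have hN_pos : 0 < N := by
    rcases Nat.eq_zero_or_pos N with h0 | h
    · rw [h0] at hEneg; norm_num at hEneg
    · exact h
  have hab_ne : b - a ≠ 0 := by
    intro h
    rw [h] at hEneg; norm_num at hEneg
  have hab : a < b := by
    have hne : μ ≠ 0 := IsProbabilityMeasure.ne_zero μ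
    haveI : (ae μ).NeBot := ae_neBot.mpr hne
    obtain ⟨ω, hω⟩ := (hbdd ⟨0, hN_pos⟩).exists
    have hle : a ≤ b := hω.1.trans hω.2
    exact lt_of_le_of_ne hle (fun h => hab_ne (by rw [h, sub_self]))
  have hNR : (0:ℝ) < N := by exact_mod_cast hN_pos
  set Nm : Fin M → ℕ := fun m => (Finset.univ.filter fun i : Fin N => c i = m).card with hNm
  have hNmin_le : ∀ m, Nmin ≤ Nm m := fun m => by
    rw [hNmin]; exact Finset.inf'_le _ (Finset.mem_univ m)
  have hNm_pos : ∀ m, 0 < Nm m := fun m => lt_of_lt_of_le hNmin_pos (hNmin_le m)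
  have hNsum : ∑ m, Nm m = N := by
    have h := Finset.card_eq_sum_card_fiberwise
      (fun (i : Fin N) (_ : i ∈ Finset.univ) => Finset.mem_univ (c i))
    simpa [Finset.card_univ] using h.symm
  have hcard : ∀ m, Fintype.card {i : Fin N // c i = m} = Nm m := fun m =>
    Fintype.card_subtype _
  set ε : Fin M → ℝ := fun m => t * Nm m / N with hε
  have hεpos : ∀ m, 0 < ε m := fun m => by
    have h1 : (0:ℝ) < Nm m := by exact_mod_cast hNm_pos m
    exact div_pos (mul_pos ht h1) hNR
  set B : Fin M → Set Ω := fun m => {ω | ε m ≤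
    |(∑ i : {i : Fin N // c i = m}, X i ω) -
      ∑ i : {i : Fin N // c i = m}, ∫ ω', X i ω' ∂μ|} with hB
  have hsum_eq : ∀ (f : Fin N → ℝ),
      ∑ m, ∑ i : {i : Fin N // c i = m}, f i = ∑ i, f i := by
    intro f
    have h1 : ∀ m : Fin M, ∑ i : {i : Fin N // c i = m}, f i
        = ∑ i ∈ Finset.univ.filter (fun i => c i = m), f i := fun m =>
      (Finset.sum_subtype _ (by simp) f).symm
    simp_rw [h1]
    exact Finset.sum_fiberwise _ _ _
  have hincl : {ω | t ≤ |(∑ i, X i ω) - ∑ i, ∫ ω', X i ω' ∂μ|} ⊆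
      ⋃ m ∈ Finset.univ, B m := by
    intro ω hω
    simp only [Set.mem_setOf_eq] at hω
    by_contra hc
    rw [Set.mem_iUnion₂] at hc
    push_neg at hc
    have hlt : ∀ m, |(∑ i : {i : Fin N // c i = m}, X i ω) -
        ∑ i : {i : Fin N // c i = m}, ∫ ω', X i ω' ∂μ| < ε m := by
      intro m
      have := hc m (Finset.mem_univ m)
      simp only [hB, Set.mem_setOf_eq, not_le] at this
      exact this
    have h1 : (∑ i, X i ω) - ∑ i, ∫ ω', X i ω' ∂μ
        = ∑ m, ((∑ i : {i : Fin N // c i = m}, X i ω) -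
          ∑ i : {i : Fin N // c i = m}, ∫ ω', X i ω' ∂μ) := by
      rw [Finset.sum_sub_distrib, hsum_eq (fun i => X i ω),
        hsum_eq (fun i => ∫ ω', X i ω' ∂μ)]
    have h2 := Finset.abs_sum_le_sum_abs
      (fun m => (∑ i : {i : Fin N // c i = m}, X i ω) -
        ∑ i : {i : Fin N // c i = m}, ∫ ω', X i ω' ∂μ) Finset.univ
    have h3 : ∑ m, |(∑ i : {i : Fin N // c i = m}, X i ω) -
        ∑ i : {i : Fin N // c i = m}, ∫ ω', X i ω' ∂μ| < ∑ m, ε m :=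
      Finset.sum_lt_sum_of_nonempty (Finset.univ_nonempty_iff.mpr ⟨⟨0, hM⟩⟩)
        (fun m _ => hlt m)
    have h4 : ∑ m, ε m = t := by
      simp only [hε]
      rw [← Finset.sum_div, ← Finset.mul_sum]
      have : ∑ m, ((Nm m : ℝ)) = (N : ℝ) := by
        rw [← Nat.cast_sum, hNsum]
      rw [this]
      field_simp
    rw [h1] at hω
    linarith
  have hbound : ∀ m, μ (B m) ≤ ENNReal.ofReal
      (2 * Real.exp (-2 * t ^ 2 * Nmin / ((N:ℝ) ^ 2 * (b - a) ^ 2))) := by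
    intro m
    have hn : 0 < Fintype.card {i : Fin N // c i = m} := by
      rw [hcard]; exact hNm_pos m
    have h := hds_two_sided μ hn (fun i : {i : Fin N // c i = m} => X i)
      (fun i => hmeas i.1) hab (fun i => hbdd i.1) (hindep m) (ε m) (hεpos m)
    refine le_trans h ?_
    apply ENNReal.ofReal_le_ofReal
    have hNmR : (0:ℝ) < Nm m := by exact_mod_cast hNm_pos m
    have heq : -2 * ε m ^ 2 / ((Fintype.card {i : Fin N // c i = m}) * (b - a) ^ 2)
        = -2 * t ^ 2 * (Nm m : ℝ) / ((N:ℝ) ^ 2 * (b - a) ^ 2) := by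
      rw [hcard m, hε]
      field_simp
    rw [heq]
    have hmono : -2 * t ^ 2 * (Nm m : ℝ) / ((N:ℝ) ^ 2 * (b - a) ^ 2)
        ≤ -2 * t ^ 2 * (Nmin : ℝ) / ((N:ℝ) ^ 2 * (b - a) ^ 2) := by
      have hden : (0:ℝ) < (N:ℝ) ^ 2 * (b - a) ^ 2 :=
        mul_pos (pow_pos hNR 2) (pow_pos (sub_pos.mpr hab) 2)
      have hnum : -2 * t ^ 2 * (Nm m : ℝ) ≤ -2 * t ^ 2 * (Nmin : ℝ) := by
        have hc : (Nmin : ℝ) ≤ (Nm m : ℝ) := by exact_mod_cast hNmin_le m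
        nlinarith [sq_nonneg t]
      exact div_le_div_of_nonneg_right hnum hden.le
    have := Real.exp_le_exp.mpr hmono
    linarith
  calc μ {ω | t ≤ |(∑ i, X i ω) - ∑ i, ∫ ω', X i ω' ∂μ|}
      ≤ μ (⋃ m ∈ Finset.univ, B m) := measure_mono hincl
    _ ≤ ∑ m, μ (B m) := measure_biUnion_finset_le _ _
    _ ≤ ∑ _m : Fin M, ENNReal.ofReal
        (2 * Real.exp (-2 * t ^ 2 * Nmin / ((N:ℝ) ^ 2 * (b - a) ^ 2))) :=
        Finset.sum_le_sum (fun m _ => hbound m)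
    _ = (M : ENNReal) * ENNReal.ofReal
        (2 * Real.exp (-2 * t ^ 2 * Nmin / ((N:ℝ) ^ 2 * (b - a) ^ 2))) := by
        rw [Finset.sum_const, Finset.card_univ, Fintype.card_fin, nsmul_eq_mul]
    _ = ENNReal.ofReal (2 * M *
        Real.exp (-2 * t ^ 2 * Nmin / ((N:ℝ) ^ 2 * (b - a) ^ 2))) := by
        rw [← ENNReal.ofReal_natCast M, ← ENNReal.ofReal_mul (Nat.cast_nonneg M)]
        congr 1
        ring
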